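/- Let α, β be real numbers with α < β. Then for every t ∈ ℝ, ∫_{−∞}^{∞} θ_{[α,β]}(t+s) / (2 e^{|s|}) ds = θ_{[α,β]}(t) + e^{−|α−t|}/2 − e^{−|β−t|}/2; in other words the integral on the left equals Θ_{[α,β]}(t). -/

import Mathlib

open MeasureTheory Set Filter Real
open scoped Topology

/-- The clipping function `θ_{[α,β]}(t) = max(α, min(β, t))`. -/
noncomputable def thetaClip (α β t : ℝ) : ℝ := max α (min β t)

/-- The smoothed clipping function
`Θ_{[α,β]}(t) = θ_{[α,β]}(t) + e^{-|α-t|}/2 - e^{-|β-t|}/2`. -/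
noncomputable def ThetaClip (α β t : ℝ) : ℝ :=
  thetaClip α β t + Real.exp (-|α - t|) / 2 - Real.exp (-|β - t|) / 2


lemma integrable_comp_abs {f : ℝ → ℝ} (hf0 : IntegrableOn f (Ioi 0)) :
    Integrable (fun x : ℝ => f |x|) := by
  have hf : IntegrableOn (fun x => f |x|) (Ioi 0) := by
    apply hf0.congr_fun _ measurableSet_Ioi
    intro x hx
    simp [abs_of_pos (mem_Ioi.mp hx)]
  have int_Iic : IntegrableOn (fun x ↦ f |x|) (Iic 0) := by
    rw [← Measure.map_neg_eq_self (volume : Measure ℝ)]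
    have m : MeasurableEmbedding fun x : ℝ => -x := (Homeomorph.neg ℝ).measurableEmbedding
    rw [m.integrableOn_map_iff]
    simp_rw [Function.comp_def, abs_neg, neg_preimage, neg_Iic, neg_zero]
    exact Iff.mpr integrableOn_Ici_iff_integrableOn_Ioi hf
  rw [← integrableOn_univ, ← Iic_union_Ioi (a := (0:ℝ))]
  exact int_Iic.union hf

lemma integrable_exp_neg_abs' : Integrable (fun x : ℝ => Real.exp (-|x|)) := by
  have h : IntegrableOn (fun x : ℝ => Real.exp (-x)) (Ioi 0) := by
    have := exp_neg_integrableOn_Ioi 0 one_pos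
    simpa using this
  exact integrable_comp_abs (f := fun x => Real.exp (-x)) h

lemma integrableOn_id_mul_exp_neg : IntegrableOn (fun x : ℝ => x * Real.exp (-x)) (Ioi 0) := by
  have hderiv : ∀ x ∈ Ici (0:ℝ), HasDerivAt (fun x : ℝ => -(x + 1) * Real.exp (-x))
      (x * Real.exp (-x)) x := by
    intro x _
    have h1 : HasDerivAt (fun x : ℝ => Real.exp (-x)) (-Real.exp (-x)) x := by
      simpa using (hasDerivAt_neg x).exp
    have : HasDerivAt (_ : ℝ → ℝ) _ x := ((hasDerivAt_id x).add_const 1).fun_neg.fun_mul h1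
    convert this using 1
    · simp only [id_eq]
    simp only [id_eq]
    ring
  have htend : Tendsto (fun x : ℝ => -(x + 1) * Real.exp (-x)) atTop (𝓝 0) := by
    have h1 := tendsto_pow_mul_exp_neg_atTop_nhds_zero 1
    have h0 := tendsto_pow_mul_exp_neg_atTop_nhds_zero 0
    have := (h1.add h0).neg
    simp only [pow_one, pow_zero, one_mul] at *
    convert this using 2 with x
    · ring
    · simp
  exact integrableOn_Ioi_deriv_of_nonneg' hderiv
    (fun x hx => mul_nonneg (le_of_lt hx) (Real.exp_pos _).le) htend

lemma integrable_abs_mul_exp_neg_abs : Integrable (fun x : ℝ => |x| * Real.exp (-|x|)) := by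
  exact integrable_comp_abs (f := fun x => x * Real.exp (-x)) integrableOn_id_mul_exp_neg

lemma hasDerivAt_exp_neg (x : ℝ) : HasDerivAt (fun y : ℝ => Real.exp (-y)) (-Real.exp (-x)) x := by
  simpa using (hasDerivAt_neg x).exp

lemma tendsto_aux (c : ℝ) : Tendsto (fun x : ℝ => -(x + c) * Real.exp (-x)) atTop (𝓝 0) := by
  have h1 := tendsto_pow_mul_exp_neg_atTop_nhds_zero 1
  have h0 := tendsto_pow_mul_exp_neg_atTop_nhds_zero 0
  simp only [pow_one, pow_zero, one_mul] at h1 h0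
  have := (h1.add (h0.const_mul c)).neg
  simp only [mul_zero, add_zero, neg_zero] at this
  convert this using 2 with x
  ring

lemma hasDerivAt_aux (c x : ℝ) :
    HasDerivAt (fun y : ℝ => -(y + c) * Real.exp (-y)) ((x + c - 1) * Real.exp (-x)) x := by
  have : HasDerivAt (_ : ℝ → ℝ) _ x := (((hasDerivAt_id x).add_const c).fun_neg.fun_mul (hasDerivAt_exp_neg x))
  convert this using 1
  · simp only [id_eq]
  simp only [id_eq]
  ring

lemma integrable_abs_sub_mul (c : ℝ) :
    Integrable (fun s : ℝ => |c - s| * Real.exp (-|s|)) := by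
  have hb : Integrable (fun s : ℝ => |c| * Real.exp (-|s|) + |s| * Real.exp (-|s|)) :=
    (integrable_exp_neg_abs'.const_mul _).add integrable_abs_mul_exp_neg_abs
  refine hb.mono' ?_ ?_
  · exact ((continuous_const.sub continuous_id).abs.mul continuous_abs.neg.rexp).aestronglyMeasurable
  · filter_upwards with s
    rw [Real.norm_eq_abs, abs_of_nonneg (mul_nonneg (abs_nonneg _) (Real.exp_pos _).le),
      ← add_mul]
    exact mul_le_mul_of_nonneg_right ((abs_sub _ _).trans (by simp)) (Real.exp_pos _).le

lemma key_integral_nonneg (c : ℝ) (hc : 0 ≤ c) :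
    ∫ s : ℝ, |c - s| * Real.exp (-|s|) = 2 * c + 2 * Real.exp (-c) := by
  have hint := integrable_abs_sub_mul c
  -- the Iic 0 part
  have hIic : ∫ s in Iic (0:ℝ), |c - s| * Real.exp (-|s|) = c + 1 := by
    have hrefl := integral_comp_neg_Ioi 0 (fun s : ℝ => |c - s| * Real.exp (-|s|))
    rw [neg_zero] at hrefl
    rw [← hrefl]
    have hcongr : ∫ x in Ioi (0:ℝ), |c - (-x)| * Real.exp (-|(-x)|)
        = ∫ x in Ioi (0:ℝ), (x + c) * Real.exp (-x) := by
      refine setIntegral_congr_fun measurableSet_Ioi fun x hx => ?_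
      have hx' : (0:ℝ) < x := hx
      rw [abs_neg, abs_of_pos hx', sub_neg_eq_add,
        abs_of_nonneg (by positivity : (0:ℝ) ≤ c + x)]
      ring
    rw [hcongr]
    have := integral_Ioi_of_hasDerivAt_of_nonneg' (a := 0)
      (g := fun y : ℝ => -(y + (c + 1)) * Real.exp (-y))
      (g' := fun x : ℝ => (x + c) * Real.exp (-x))
      (fun x _ => by
        have := hasDerivAt_aux (c + 1) x
        convert this using 1; ring)
      (fun x hx => mul_nonneg (by simp only [mem_Ioi] at hx; linarith) (Real.exp_pos _).le)
      (tendsto_aux (c + 1))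
    rw [this]
    simp
  -- the Ioi c part
  have hTail : ∫ s in Ioi c, (s - c) * Real.exp (-s) = Real.exp (-c) := by
    have := integral_Ioi_of_hasDerivAt_of_nonneg' (a := c)
      (g := fun y : ℝ => -(y + (-c + 1)) * Real.exp (-y))
      (g' := fun x : ℝ => (x - c) * Real.exp (-x))
      (fun x _ => by
        have := hasDerivAt_aux (-c + 1) x
        convert this using 1; ring)
      (fun x hx => mul_nonneg (by simp only [mem_Ioi] at hx; linarith) (Real.exp_pos _).le)
      (tendsto_aux (-c + 1))
    rw [this]
    ring_nf
  -- the Ioc 0 c part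
  have hMid : ∫ s in Ioc (0:ℝ) c, (c - s) * Real.exp (-s) = c - 1 + Real.exp (-c) := by
    rw [← intervalIntegral.integral_of_le hc]
    have hft := intervalIntegral.integral_eq_sub_of_hasDerivAt (a := 0) (b := c)
      (f := fun y : ℝ => (y + 1 - c) * Real.exp (-y))
      (f' := fun x : ℝ => (c - x) * Real.exp (-x))
      (fun x _ => by
        have : HasDerivAt (_ : ℝ → ℝ) _ x := (((hasDerivAt_id x).add_const (1 - c)).fun_mul (hasDerivAt_exp_neg x))
        show HasDerivAt (fun y : ℝ => (y + 1 - c) * Real.exp (-y)) ((c - x) * Real.exp (-x)) x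
        convert this using 1
        · ext y; simp only [id_eq]; ring
        · simp only [id_eq]; ring)
      (Continuous.intervalIntegrable (by continuity) _ _)
    rw [hft]
    simp only [neg_zero, Real.exp_zero]
    ring
  -- the Ioi 0 part
  have hIoi : ∫ s in Ioi (0:ℝ), |c - s| * Real.exp (-|s|) = c - 1 + 2 * Real.exp (-c) := by
    rw [← Ioc_union_Ioi_eq_Ioi hc,
      setIntegral_union (Ioc_disjoint_Ioi le_rfl) measurableSet_Ioi
        (hint.integrableOn) (hint.integrableOn)]
    have h1 : ∫ s in Ioc (0:ℝ) c, |c - s| * Real.exp (-|s|)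
        = ∫ s in Ioc (0:ℝ) c, (c - s) * Real.exp (-s) := by
      refine setIntegral_congr_fun measurableSet_Ioc fun x hx => ?_
      rw [abs_of_nonneg (by linarith [hx.2] : (0:ℝ) ≤ c - x), abs_of_pos hx.1]
    have h2 : ∫ s in Ioi c, |c - s| * Real.exp (-|s|)
        = ∫ s in Ioi c, (s - c) * Real.exp (-s) := by
      refine setIntegral_congr_fun measurableSet_Ioi fun x hx => ?_
      have hx' : c < x := hx
      rw [abs_of_nonpos (by linarith : c - x ≤ 0), abs_of_pos (lt_of_le_of_lt hc hx')]
      ring_nf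
    rw [h1, h2, hMid, hTail]
    ring
  calc ∫ s : ℝ, |c - s| * Real.exp (-|s|)
      = (∫ s in Iic (0:ℝ), |c - s| * Real.exp (-|s|))
        + ∫ s in Ioi (0:ℝ), |c - s| * Real.exp (-|s|) := by
        rw [← setIntegral_union (Iic_disjoint_Ioi le_rfl) measurableSet_Ioi
          hint.integrableOn hint.integrableOn, Iic_union_Ioi, setIntegral_univ]
    _ = 2 * c + 2 * Real.exp (-c) := by rw [hIic, hIoi]; ring

lemma key_integral (c : ℝ) :
    ∫ s : ℝ, |c - s| * Real.exp (-|s|) = 2 * |c| + 2 * Real.exp (-|c|) := by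
  rcases le_total 0 c with hc | hc
  · rw [abs_of_nonneg hc]; exact key_integral_nonneg c hc
  · have hrefl : ∫ s : ℝ, |c - s| * Real.exp (-|s|)
        = ∫ s : ℝ, |(-c) - s| * Real.exp (-|s|) := by
      rw [← integral_neg_eq_self]
      congr 1
      ext x
      rw [abs_neg, show c - -x = -(-c - x) by ring, abs_neg]
    rw [hrefl, abs_of_nonpos hc]
    exact key_integral_nonneg (-c) (by linarith)

lemma thetaClip_eq (α β : ℝ) (h : α ≤ β) (x : ℝ) :
    thetaClip α β x = (α + β) / 2 + (|α - x| - |β - x|) / 2 := by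
  unfold thetaClip
  rcases le_total x β with h2 | h2
  · rw [min_eq_right h2]
    rcases le_total x α with h1 | h1
    · rw [max_eq_left h1, abs_of_nonneg (by linarith), abs_of_nonneg (by linarith)]; ring
    · rw [max_eq_right h1, abs_of_nonpos (by linarith), abs_of_nonneg (by linarith)]; ring
  · rw [min_eq_left h2, max_eq_right h, abs_of_nonpos (by linarith),
      abs_of_nonpos (by linarith)]; ring

lemma integral_exp_neg_abs_eq_two : ∫ s : ℝ, Real.exp (-|s|) = 2 := by
  have := integral_comp_abs (f := fun x => Real.exp (-x))
  rwa [integral_exp_neg_Ioi_zero, mul_one] at this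


/-- Lemma 6.3(1): `Θ_{[α,β]}(t) = ∫_{-∞}^{∞} θ_{[α,β]}(t+s) / (2 e^{|s|}) ds`. -/
theorem thetaClip_integral (α β : ℝ) (h : α < β) (t : ℝ) :
    ∫ s : ℝ, thetaClip α β (t + s) / (2 * Real.exp |s|) = ThetaClip α β t := by
  have hfun : ∀ s : ℝ, thetaClip α β (t + s) / (2 * Real.exp |s|)
      = (α + β) / 4 * Real.exp (-|s|) + |α - t - s| * Real.exp (-|s|) / 4
        - |β - t - s| * Real.exp (-|s|) / 4 := by
    intro s
    rw [thetaClip_eq α β h.le, show α - (t + s) = α - t - s by ring,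
      show β - (t + s) = β - t - s by ring, Real.exp_neg]
    have h0 : Real.exp |s| ≠ 0 := Real.exp_ne_zero _
    field_simp
    ring
  simp only [hfun]
  have i1 : Integrable (fun s : ℝ => (α + β) / 4 * Real.exp (-|s|)) :=
    integrable_exp_neg_abs'.const_mul _
  have i2 : Integrable (fun s : ℝ => |α - t - s| * Real.exp (-|s|) / 4) :=
    (integrable_abs_sub_mul (α - t)).div_const 4
  have i3 : Integrable (fun s : ℝ => |β - t - s| * Real.exp (-|s|) / 4) :=
    (integrable_abs_sub_mul (β - t)).div_const 4
  have i12 : Integrable (fun s : ℝ => (α + β) / 4 * Real.exp (-|s|)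
      + |α - t - s| * Real.exp (-|s|) / 4) := i1.add i2
  rw [integral_sub i12 i3, integral_add i1 i2, integral_const_mul,
    integral_div, integral_div, integral_exp_neg_abs_eq_two,
    key_integral (α - t), key_integral (β - t), ThetaClip, thetaClip_eq α β h.le]
  ring
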